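/- Let μ be a regular uncountable cardinal, ⟨T_ξ : ξ < μ⟩ a ⊆-increasing continuous sequence of trees with T_ξ ⊆ 2^{<α(T_ξ)} and α(T_ξ) < μ strictly increasing with sup μ, and ⟨f_ξ : ξ < μ⟩ functions with f_ξ a witness for T_ξ such that ζ < ξ implies f_ζ(η) ⊴ f_ξ(η) for all η ∈ T_ζ. Suppose ρ ∈ 2^μ is such that ρ↾β ∈ ⋃_ξ T_ξ for all β < μ, and S⁺ ⊆ μ is a stationary set of limit ordinals δ with α(T_δ) = δ and ρ↾δ ∈ range(f_δ). Then there exist ξ* < μ and ρ* ∈ T_{ξ*} such that for stationarily many δ ∈ S⁺, f_δ(ρ*) = ρ↾δ; consequently ρ = ⋃_{ξ* ≤ ξ < μ} f_ξ(ρ*). -/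

import Mathlib

open Ordinal Set Cardinal

/-- A transfinite binary sequence: a length and values, zero beyond the length. -/
structure BSeq where
  len : Ordinal.{0}
  val : Ordinal.{0} → Bool
  val_eq_false : ∀ β, len ≤ β → val β = false

namespace BSeq

/-- The empty sequence. -/
def nil : BSeq := ⟨0, fun _ => false, fun _ _ => rfl⟩

/-- Restriction `η↾β` of a sequence to length `β`. -/
noncomputable def restrict (η : BSeq) (β : Ordinal) : BSeq :=
  ⟨min η.len β, fun γ => if γ < β then η.val γ else false, by
    intro γ hγ
    rcases min_le_iff.mp hγ with h | h
    · by_cases hb : γ < β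
      · simpa [hb] using η.val_eq_false γ h
      · simp [hb]
    · simp [not_lt.mpr h]⟩

/-- `ν ⊴ η` : `ν` is an initial segment of `η`. -/
def IsInitSeg (ν η : BSeq) : Prop :=
  ν.len ≤ η.len ∧ ∀ β < ν.len, ν.val β = η.val β

/-- `ν ◁ η` : `ν` is a proper initial segment of `η`. -/
def IsStrictInitSeg (ν η : BSeq) : Prop :=
  ν.IsInitSeg η ∧ ν.len < η.len

/-- `η⌢⟨b⟩`, appending one bit. -/
noncomputable def snoc (η : BSeq) (b : Bool) : BSeq :=
  ⟨η.len + 1, fun β => if β = η.len then b else η.val β, by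
    intro β hβ
    have h1 : η.len < β := by
      exact lt_of_lt_of_le (lt_add_one η.len) hβ
    rw [if_neg (ne_of_gt h1)]
    exact η.val_eq_false β h1.le⟩

end BSeq

/-- The level `T_{[β]} = T ∩ 2^β`. -/
def level (T : Set BSeq) (β : Ordinal) : Set BSeq := {η ∈ T | η.len = β}

/-- `T_{[<β]} = T ∩ 2^{<β}`. -/
def levelLT (T : Set BSeq) (β : Ordinal) : Set BSeq := {η ∈ T | η.len < β}

/-- `lim_δ(T) = {η ∈ 2^δ : ∀ β < δ, η↾β ∈ T}`. -/
def limAt (T : Set BSeq) (δ : Ordinal) : Set BSeq :=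
  {η | η.len = δ ∧ ∀ β < δ, η.restrict β ∈ T}

/-- `T ⊆ 2^{<α}` is an `α`-tree. -/
structure IsTree (α : Ordinal) (T : Set BSeq) : Prop where
  limit : Order.IsSuccLimit α
  len_lt : ∀ η ∈ T, η.len < α
  nil_mem : BSeq.nil ∈ T
  downClosed : ∀ ν η : BSeq, ν.IsStrictInitSeg η → η ∈ T → ν ∈ T
  succ_mem : ∀ η ∈ T, ∀ b : Bool, η.snoc b ∈ T
  ext_mem : ∀ η ∈ T, ∀ β, η.len ≤ β → β < α → ∃ ρ ∈ T, η.IsInitSeg ρ ∧ ρ.len = β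

/-- `T` has true height `α`: every node lies on a cofinal branch through `T`. -/
def TrueHeight (α : Ordinal) (T : Set BSeq) : Prop :=
  ∀ η ∈ T, ∃ ν : BSeq, ν.len = α ∧ η.IsStrictInitSeg ν ∧ ∀ β < α, ν.restrict β ∈ T

/-- A condition of the forcing `Q`: a tree of true height `α` (a limit ordinal)
omitting at most one limit point at each limit level. -/
structure IsCond (α : Ordinal) (T : Set BSeq) : Prop where
  tree : IsTree α T
  trueHeight : TrueHeight α T
  omits_le_one : ∀ δ < α, Order.IsSuccLimit δ → (limAt T δ \ level T δ).Subsingleton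

/-- The end-extension order of `Q`. -/
def QLe (α₁ : Ordinal) (T₁ : Set BSeq) (α₂ : Ordinal) (T₂ : Set BSeq) : Prop :=
  α₁ ≤ α₂ ∧ T₁ = levelLT T₂ α₁

/-- `f` is a witness for `T` (of height `α`). -/
def IsWitness (α : Ordinal) (T : Set BSeq) (f : BSeq → BSeq) : Prop :=
  ∀ η ∈ T, f η ∈ limAt T α ∧ η.IsStrictInitSeg (f η)

/-- The order of `Q^*`. -/
def QsLe (α₁ : Ordinal) (T₁ : Set BSeq) (f₁ : BSeq → BSeq)
    (α₂ : Ordinal) (T₂ : Set BSeq) (f₂ : BSeq → BSeq) : Prop :=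
  QLe α₁ T₁ α₂ T₂ ∧ ∀ η ∈ T₁, (f₁ η).IsInitSeg (f₂ η)

/-- `C` is a club (closed unbounded) subset of `μ`. -/
def IsClubIn (C : Set Ordinal) (μ : Ordinal) : Prop :=
  C ⊆ Set.Iio μ ∧
  (∀ δ < μ, Order.IsSuccLimit δ → (∀ β < δ, ∃ γ ∈ C, β < γ ∧ γ < δ) → δ ∈ C) ∧
  (∀ β < μ, ∃ γ ∈ C, β < γ ∧ γ < μ)

/-- `S` is stationary in `μ`. -/
def IsStationaryIn (S : Set Ordinal) (μ : Ordinal) : Prop :=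
  ∀ C, IsClubIn C μ → (S ∩ C).Nonempty

/-- The set of accumulation points of a set of ordinals. -/
def accPts (C : Set Ordinal) : Set Ordinal :=
  {β | 0 < β ∧ ∀ γ < β, ∃ δ ∈ C, γ < δ ∧ δ < β}

theorem BSeq.ext' {x y : BSeq} (h1 : x.len = y.len)
    (h2 : ∀ β < x.len, x.val β = y.val β) : x = y := by
  obtain ⟨lx, vx, px⟩ := x
  obtain ⟨ly, vy, py⟩ := y
  simp only at h1 h2
  subst h1
  simp only [BSeq.mk.injEq, true_and]
  funext β
  by_cases hβ : β < lx
  · exact h2 β hβ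
  · rw [px β (not_lt.1 hβ), py β (not_lt.1 hβ)]

theorem BSeq.initSeg_trans {x y z : BSeq} (h1 : x.IsInitSeg y) (h2 : y.IsInitSeg z) :
    x.IsInitSeg z :=
  ⟨h1.1.trans h2.1, fun β hβ => (h1.2 β hβ).trans (h2.2 β (lt_of_lt_of_le hβ h1.1))⟩

theorem clubIio {o : Ordinal} (ho : Order.IsSuccLimit o) : IsClubIn (Set.Iio o) o :=
  ⟨subset_rfl, fun δ hδ _ _ => hδ, fun β hβ =>
    ⟨β + 1, by rw [Ordinal.add_one_eq_succ]; exact ho.succ_lt hβ,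
      lt_of_lt_of_le (Order.lt_succ β) (by rw [Ordinal.add_one_eq_succ]),
      by rw [Ordinal.add_one_eq_succ]; exact ho.succ_lt hβ⟩⟩

theorem clubIoo {o : Ordinal} (ho : Order.IsSuccLimit o) {ξ : Ordinal} (hξ : ξ < o) :
    IsClubIn (Set.Ioo ξ o) o := by
  refine ⟨fun x hx => hx.2, ?_, ?_⟩
  · intro δ hδ hδlim happ
    obtain ⟨γ, hγ, _, hγδ⟩ := happ 0 hδlim.pos
    exact ⟨hγ.1.trans hγδ, hδ⟩
  · intro β hβ
    refine ⟨max β ξ + 1, ⟨?_, ?_⟩, ?_, ?_⟩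
    · exact lt_of_le_of_lt (le_max_right β ξ) (lt_of_lt_of_le (Order.lt_succ _)
        (by rw [Ordinal.add_one_eq_succ]))
    · rw [Ordinal.add_one_eq_succ]; exact ho.succ_lt (max_lt hβ hξ)
    · exact lt_of_le_of_lt (le_max_left β ξ) (lt_of_lt_of_le (Order.lt_succ _)
        (by rw [Ordinal.add_one_eq_succ]))
    · rw [Ordinal.add_one_eq_succ]; exact ho.succ_lt (max_lt hβ hξ)

theorem diagClub (μ : Cardinal.{0}) (hμ : μ.IsRegular) (hμ0 : Cardinal.aleph0 < μ)
    (C : Ordinal → Set Ordinal) (hC : ∀ β < μ.ord, IsClubIn (C β) μ.ord) :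
    IsClubIn {δ | δ < μ.ord ∧ ∀ β < δ, δ ∈ C β} μ.ord := by
  have hord : Order.IsSuccLimit μ.ord := Cardinal.isSuccLimit_ord hμ0.le
  refine ⟨fun δ hδ => hδ.1, ?_, ?_⟩
  · -- closed
    intro δ hδμ hδlim happ
    refine ⟨hδμ, fun β hβδ => ?_⟩
    refine (hC β (hβδ.trans hδμ)).2.1 δ hδμ hδlim fun γ' hγ' => ?_
    obtain ⟨γ, hγD, hmax, hγδ⟩ := happ (max β γ') (max_lt hβδ hγ')
    exact ⟨γ, hγD.2 β (lt_of_le_of_lt (le_max_left β γ') hmax),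
      lt_of_le_of_lt (le_max_right β γ') hmax, hγδ⟩
  · -- unbounded
    intro β₀ hβ₀
    have hnext : ∀ β x, β < μ.ord → x < μ.ord →
        ∃ γ ∈ C β, x < γ ∧ γ < μ.ord := fun β x hβ hx => (hC β hβ).2.2 x hx
    classical
    let next : Ordinal → Ordinal → Ordinal := fun β x =>
      if h : β < μ.ord ∧ x < μ.ord then (hnext β x h.1 h.2).choose else 0
    have hnext' : ∀ β x (hβ : β < μ.ord) (hx : x < μ.ord),
        next β x ∈ C β ∧ x < next β x ∧ next β x < μ.ord := by
      intro β x hβ hx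
      have h : β < μ.ord ∧ x < μ.ord := ⟨hβ, hx⟩
      simp only [next, dif_pos h]
      obtain ⟨h1, h2, h3⟩ := (hnext β x h.1 h.2).choose_spec
      exact ⟨h1, h2, h3⟩
    let F : Ordinal → Ordinal := fun x => Ordinal.bsup x (fun β _ => next β x)
    have hFlt : ∀ x < μ.ord, F x < μ.ord := by
      intro x hx
      refine Cardinal.bsup_lt_ord_of_isRegular hμ (Cardinal.lt_ord.1 hx) ?_
      intro β hβ
      exact (hnext' β x (hβ.trans hx) hx).2.2
    have hFge : ∀ β x, β < x → next β x ≤ F x := fun β x h => Ordinal.le_bsup _ β h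
    let e : ℕ → Ordinal := fun n => Nat.rec (β₀ + 1) (fun _ y => max (F y) y + 1) n
    have he0 : e 0 = β₀ + 1 := rfl
    have heS : ∀ n, e (n + 1) = max (F (e n)) (e n) + 1 := fun n => rfl
    have helt : ∀ n, e n < μ.ord := by
      intro n
      induction n with
      | zero => rw [he0, Ordinal.add_one_eq_succ]; exact hord.succ_lt hβ₀
      | succ n ih =>
        rw [heS, Ordinal.add_one_eq_succ]
        exact hord.succ_lt (max_lt (hFlt _ ih) ih)
    have hemono : StrictMono e := by
      refine strictMono_nat_of_lt_succ fun n => ?_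
      rw [heS]
      exact lt_of_le_of_lt (le_max_right _ _)
        (lt_of_lt_of_le (Order.lt_succ _) (by rw [Ordinal.add_one_eq_succ]))
    set δ : Ordinal := ⨆ n, e n with hδdef
    have hele : ∀ n, e n ≤ δ := fun n => Ordinal.le_iSup e n
    have hδμ : δ < μ.ord := by
      rw [hδdef]
      exact Cardinal.iSup_lt_ord_of_isRegular (f := e) hμ (by rw [Cardinal.mk_nat]; exact hμ0) helt
    have hltδ : ∀ x, x < δ ↔ ∃ n, x < e n := fun x => Ordinal.lt_iSup_iff
    have hδlim : Order.IsSuccLimit δ := by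
      refine Ordinal.isSuccLimit_iff.2 ⟨?_, Order.isSuccPrelimit_of_succ_lt ?_⟩
      · intro h0
        have := hele 0
        rw [h0, he0, nonpos_iff_eq_zero] at this
        exact (Ordinal.succ_ne_zero β₀) (by rwa [Ordinal.add_one_eq_succ] at this)
      · intro x hx
        obtain ⟨n, hn⟩ := (hltδ x).1 hx
        exact lt_of_le_of_lt (Order.succ_le_iff.2 hn)
          (lt_of_lt_of_le (hemono (Nat.lt_succ_self n)) (hele (n + 1)))
    refine ⟨δ, ⟨hδμ, ?_⟩, ?_, hδμ⟩
    · intro β hβδ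
      have hβμ : β < μ.ord := hβδ.trans hδμ
      refine (hC β hβμ).2.1 δ hδμ hδlim fun γ' hγ' => ?_
      obtain ⟨n, hn⟩ := (hltδ β).1 hβδ
      obtain ⟨m, hm⟩ := (hltδ γ').1 hγ'
      set k := max n m with hk
      have hβk : β < e k := lt_of_lt_of_le hn (hemono.monotone (le_max_left n m))
      have hγ'k : γ' < e k := lt_of_lt_of_le hm (hemono.monotone (le_max_right n m))
      obtain ⟨h1, h2, _⟩ := hnext' β (e k) hβμ (helt k)
      refine ⟨next β (e k), h1, hγ'k.trans h2, ?_⟩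
      calc next β (e k) ≤ F (e k) := hFge β (e k) hβk
        _ < e (k + 1) := by
            rw [heS, Ordinal.add_one_eq_succ]
            exact lt_of_le_of_lt (le_max_left _ _) (Order.lt_succ _)
        _ ≤ δ := hele (k + 1)
    · exact lt_of_lt_of_le (lt_of_lt_of_le (Order.lt_succ β₀)
        (by rw [← Ordinal.add_one_eq_succ, ← he0])) (hele 0)

theorem fodor (μ : Cardinal.{0}) (hμ : μ.IsRegular) (hμ0 : Cardinal.aleph0 < μ)
    (S : Set Ordinal) (hS : IsStationaryIn S μ.ord)
    (g : Ordinal → Ordinal) (hg : ∀ δ ∈ S, δ < μ.ord → g δ < δ) :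
    ∃ β < μ.ord, IsStationaryIn {δ ∈ S | g δ = β} μ.ord := by
  have hord : Order.IsSuccLimit μ.ord := Cardinal.isSuccLimit_ord hμ0.le
  by_contra hcon
  push_neg at hcon
  have key : ∀ β : Ordinal, ∃ Cb : Set Ordinal, IsClubIn Cb μ.ord ∧
      (β < μ.ord → {δ ∈ S | g δ = β} ∩ Cb = ∅) := by
    intro β
    by_cases hβ : β < μ.ord
    · have := hcon β hβ
      simp only [IsStationaryIn, not_forall] at this
      obtain ⟨Cb, hCb, hne⟩ := this
      exact ⟨Cb, hCb, fun _ => Set.not_nonempty_iff_eq_empty.1 hne⟩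
    · exact ⟨Set.Iio μ.ord, clubIio hord, fun h => absurd h hβ⟩
  choose C hclub hempty using key
  obtain ⟨δ, hδS, hδμ, hδD⟩ := hS _ (diagClub μ hμ hμ0 C (fun β _ => hclub β))
  have hreg : g δ < δ := hg δ hδS hδμ
  have : δ ∈ {δ' ∈ S | g δ' = g δ} ∩ C (g δ) := ⟨⟨hδS, rfl⟩, hδD (g δ) hreg⟩
  rw [hempty (g δ) (hreg.trans hδμ)] at this
  exact this

theorem restrict_isInitSeg (η : BSeq) (β : Ordinal) : (η.restrict β).IsInitSeg η := by
  refine ⟨min_le_left _ _, fun γ hγ => ?_⟩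
  have hγβ : γ < β := lt_of_lt_of_le hγ (min_le_right _ _)
  show (if γ < β then η.val γ else false) = η.val γ
  rw [if_pos hγβ]

theorem stmt11 (μ : Cardinal) (hμ : μ.IsRegular) (hμ0 : Cardinal.aleph0 < μ)
    (T : Ordinal → Set BSeq) (a : Ordinal → Ordinal) (f : Ordinal → BSeq → BSeq)
    (hcond : ∀ ξ < μ.ord, IsTree (a ξ) (T ξ) ∧ IsWitness (a ξ) (T ξ) (f ξ) ∧ a ξ < μ.ord)
    (hmono : ∀ ζ ξ, ζ < ξ → ξ < μ.ord → T ζ ⊆ T ξ ∧ a ζ < a ξ ∧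
      ∀ η ∈ T ζ, (f ζ η).IsInitSeg (f ξ η))
    (hcont : ∀ ξ, Order.IsSuccLimit ξ → ξ < μ.ord → T ξ = ⋃ ζ ∈ Set.Iio ξ, T ζ)
    (hsup : ∀ β < μ.ord, ∃ ξ < μ.ord, β < a ξ)
    (ρ : BSeq) (hρ : ρ.len = μ.ord)
    (hρT : ∀ β < μ.ord, ρ.restrict β ∈ ⋃ ξ ∈ Set.Iio μ.ord, T ξ)
    (Splus : Set Ordinal) (hSplus : IsStationaryIn Splus μ.ord)
    (hSp : ∀ δ ∈ Splus, Order.IsSuccLimit δ ∧ a δ = δ ∧ ∃ η ∈ T δ, f δ η = ρ.restrict δ) :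
    ∃ ξs < μ.ord, ∃ ρs ∈ T ξs,
      IsStationaryIn {δ ∈ Splus | f δ ρs = ρ.restrict δ} μ.ord ∧
      ∀ ξ, ξs ≤ ξ → ξ < μ.ord → (f ξ ρs).IsInitSeg ρ := by
  classical
  have hord : Order.IsSuccLimit μ.ord := Cardinal.isSuccLimit_ord hμ0.le
  choose hlim ha η hηT hηf using hSp
  have hfact : ∀ δ (h : δ ∈ Splus), δ < μ.ord →
      (η δ h).len < δ ∧ η δ h = ρ.restrict (η δ h).len := by
    intro δ h hδμ
    have hwit := (hcond δ hδμ).2.1 (η δ h) (hηT δ h)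
    have hstrict : (η δ h).IsStrictInitSeg (ρ.restrict δ) := by
      rw [← hηf δ h]; exact hwit.2
    have hlenδ : (ρ.restrict δ).len = δ := by
      show min ρ.len δ = δ
      rw [hρ]; exact min_eq_right hδμ.le
    have hlt : (η δ h).len < δ := lt_of_lt_of_eq hstrict.2 hlenδ
    refine ⟨hlt, BSeq.ext' ?_ ?_⟩
    · show (η δ h).len = min ρ.len ((η δ h).len)
      rw [hρ, min_eq_right (hlt.trans hδμ).le]
    · intro β hβ
      have h1 : (η δ h).val β = (ρ.restrict δ).val β := hstrict.1.2 β hβ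
      have h2 : (ρ.restrict δ).val β = ρ.val β := by
        show (if β < δ then ρ.val β else false) = ρ.val β
        rw [if_pos (hβ.trans hlt)]
      have h3 : (ρ.restrict (η δ h).len).val β = ρ.val β := by
        show (if β < (η δ h).len then ρ.val β else false) = ρ.val β
        rw [if_pos hβ]
      rw [h1, h2, h3]
  set g : Ordinal → Ordinal := fun δ => if h : δ ∈ Splus then (η δ h).len else 0
    with hg_def
  have hreg : ∀ δ ∈ Splus, δ < μ.ord → g δ < δ := by
    intro δ h hδ
    have : g δ = (η δ h).len := by rw [hg_def]; exact dif_pos h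
    rw [this]; exact (hfact δ h hδ).1
  obtain ⟨βs, hβsμ, hstat⟩ := fodor μ hμ hμ0 Splus hSplus g hreg
  set ρs := ρ.restrict βs with hρs
  obtain ⟨ξs, hξsμ, hρsT⟩ : ∃ ξ < μ.ord, ρs ∈ T ξ := by
    have := hρT βs hβsμ
    rw [Set.mem_iUnion₂] at this
    obtain ⟨ξ, hξ, hT⟩ := this
    exact ⟨ξ, hξ, hT⟩
  have hkey : ∀ δ (h : δ ∈ Splus), δ < μ.ord → g δ = βs → f δ ρs = ρ.restrict δ := by
    intro δ h hδμ hgδ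
    have hgval : g δ = (η δ h).len := by rw [hg_def]; exact dif_pos h
    have hglen : (η δ h).len = βs := by rw [← hgval]; exact hgδ
    have hη : η δ h = ρs := by
      rw [(hfact δ h hδμ).2, hglen, hρs]
    rw [← hη]; exact hηf δ h
  refine ⟨ξs, hξsμ, ρs, hρsT, ?_, ?_⟩
  · intro Cl hCl
    obtain ⟨δ, hmem, hδC⟩ := hstat Cl hCl
    obtain ⟨hδS, hδg⟩ := hmem
    have hδμ : δ < μ.ord := hCl.1 hδC
    exact ⟨δ, ⟨hδS, hkey δ hδS hδμ hδg⟩, hδC⟩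
  · intro ξ hξsξ hξμ
    have hρsTξ : ρs ∈ T ξ := by
      rcases eq_or_lt_of_le hξsξ with rfl | hlt
      · exact hρsT
      · exact (hmono ξs ξ hlt hξμ).1 hρsT
    obtain ⟨δ, hmem, hξδ, hδμ⟩ := hstat _ (clubIoo hord hξμ)
    obtain ⟨hδS, hδg⟩ := hmem
    have h1 : (f ξ ρs).IsInitSeg (f δ ρs) := (hmono ξ δ hξδ hδμ).2.2 ρs hρsTξ
    have h2 : f δ ρs = ρ.restrict δ := hkey δ hδS hδμ hδg
    have h3 : (ρ.restrict δ).IsInitSeg ρ := restrict_isInitSeg ρ δ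
    exact BSeq.initSeg_trans h1 (h2 ▸ h3)
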